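/- Let n ≥ 2 be an integer, let I ⊂ ℝ be a compact interval, let M ≥ 1, and let f₂,…,f_n : I → ℝ be twice continuously differentiable functions with |f_i(x)| ≤ M, |f_i'(x)| ≤ M and |f_i''(x)| ≤ M for all x ∈ I and 2 ≤ i ≤ n. There exists a constant C > 0 depending only on n and M such that the following holds. Let 0 < λ ≤ 1, Q ≥ 1, q = (q₀, q₁, …, q_n) ∈ ℝ^{n+1} and x ∈ I satisfy Q ≤ max_{0≤i≤n}|q_i| < 2Q, |q₀x − q₁| ≤ (max_i|q_i|)^{−λ}, and |q₀f_i(x) − q_i| ≤ (max_i|q_i|)^{−λ} for all 2 ≤ i ≤ n. Then for every x₀ ∈ I with |x − x₀| ≤ Q^{−(1+λ)/2}: |q₀| ≤ 2Q, |q₀x₀ − q₁| ≤ C·Q^{(1−λ)/2}, and |q₀(f_i(x₀) − x₀f_i'(x₀)) + q₁f_i'(x₀) − q_i| ≤ C·Q^{−λ} for all 2 ≤ i ≤ n. -/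
import Mathlib


set_option maxHeartbeats 1000000 in
/-- If `q ∈ ℝ^{n+1}` with `Q ≤ ‖q‖_∞ < 2Q` approximates the point
`(x, f₂(x), …, f_n(x))` on the curve in the sense that `|q₀x − q₁| ≤ ‖q‖_∞^{−λ}` and
`|q₀f_i(x) − q_i| ≤ ‖q‖_∞^{−λ}` for `2 ≤ i ≤ n`, then for every
`x₀ ∈ I ∩ B(x, Q^{−(1+λ)/2})` one has `|q₀| ≤ 2Q`, `|q₀x₀ − q₁| ≤ C·Q^{(1−λ)/2}`, and
`|q₀(f_i(x₀) − x₀f_i'(x₀)) + q₁f_i'(x₀) − q_i| ≤ C·Q^{−λ}` for all `2 ≤ i ≤ n`,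
where `C > 0` depends only on `n` and the bound `M` on `f_i, f_i', f_i''`. -/
theorem stmt17 (n : ℕ) (hn : 2 ≤ n) (M : ℝ) (hM : 1 ≤ M) :
    ∃ C : ℝ, 0 < C ∧
      ∀ (A B : ℝ), A ≤ B →
      ∀ f f' f'' : ℕ → ℝ → ℝ,
      (∀ i, 2 ≤ i → i ≤ n → ∀ x ∈ Set.Icc A B,
        HasDerivWithinAt (f i) (f' i x) (Set.Icc A B) x) →
      (∀ i, 2 ≤ i → i ≤ n → ∀ x ∈ Set.Icc A B,
        HasDerivWithinAt (f' i) (f'' i x) (Set.Icc A B) x) →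
      (∀ i, 2 ≤ i → i ≤ n → ContinuousOn (f'' i) (Set.Icc A B)) →
      (∀ i, 2 ≤ i → i ≤ n → ∀ x ∈ Set.Icc A B,
        |f i x| ≤ M ∧ |f' i x| ≤ M ∧ |f'' i x| ≤ M) →
      ∀ (lam Q : ℝ), 0 < lam → lam ≤ 1 → 1 ≤ Q →
      ∀ q : Fin (n + 1) → ℝ, ∀ x ∈ Set.Icc A B,
      ∀ Nq : ℝ, Nq = (Finset.univ.sup' Finset.univ_nonempty fun i : Fin (n + 1) => |q i|) →
      Q ≤ Nq → Nq < 2 * Q →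
      |q 0 * x - q 1| ≤ Nq ^ (-lam) →
      (∀ i : Fin (n + 1), 2 ≤ i.1 → |q 0 * f i.1 x - q i| ≤ Nq ^ (-lam)) →
      ∀ x₀ ∈ Set.Icc A B, |x - x₀| ≤ Q ^ (-(1 + lam) / 2) →
        (|q 0| ≤ 2 * Q ∧
          |q 0 * x₀ - q 1| ≤ C * Q ^ ((1 - lam) / 2) ∧
          ∀ i : Fin (n + 1), 2 ≤ i.1 →
            |q 0 * (f i.1 x₀ - x₀ * f' i.1 x₀) + q 1 * f' i.1 x₀ - q i| ≤
              C * Q ^ (-lam)) := by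
  refine ⟨5 * M, by linarith, ?_⟩
  intro A B hAB f f' f'' hdf hdf' hcf'' hbd lam Q hlam hlam1 hQ1 q x hx Nq hNqdef hQNq hNq2Q
    happx1 happx2 x₀ hx₀ hxx₀
  have hQ0 : (0:ℝ) < Q := by linarith
  have hq0 : |q 0| ≤ Nq := hNqdef ▸ Finset.le_sup' (fun j : Fin (n+1) => |q j|) (Finset.mem_univ 0)
  have hq0' : |q 0| ≤ 2 * Q := by linarith
  -- rpow facts
  have hQml : Q ^ (-lam) ≤ 1 := by
    have := Real.rpow_le_rpow_of_exponent_le hQ1 (show -lam ≤ 0 by linarith)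
    simpa using this
  have hNql : Nq ^ (-lam) ≤ Q ^ (-lam) :=
    Real.rpow_le_rpow_of_nonpos hQ0 hQNq (by linarith)
  have hNq1 : Nq ^ (-lam) ≤ 1 := hNql.trans hQml
  have h1le : (1:ℝ) ≤ Q ^ ((1 - lam) / 2) := by
    have := Real.rpow_le_rpow_of_exponent_le hQ1 (show (0:ℝ) ≤ (1 - lam) / 2 by linarith)
    simpa using this
  have hpos : (0:ℝ) < Q ^ ((1 - lam) / 2) := by positivity
  have hposl : (0:ℝ) < Q ^ (-lam) := by positivity
  have hposd : (0:ℝ) ≤ Q ^ (-(1 + lam) / 2) := by positivity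
  have hmul : Q ^ ((1 - lam) / 2) * Q ^ (-(1 + lam) / 2) = Q ^ (-lam) := by
    rw [← Real.rpow_add hQ0]; ring_nf
  have hQmul : Q * Q ^ (-(1 + lam) / 2) = Q ^ ((1 - lam) / 2) := by
    nth_rewrite 1 [← Real.rpow_one Q]
    rw [← Real.rpow_add hQ0]; ring_nf
  -- second claim
  have key2 : |q 0 * x₀ - q 1| ≤ 3 * Q ^ ((1 - lam) / 2) := by
    have h1 : |q 0 * x₀ - q 1| ≤ |q 0 * x - q 1| + |q 0| * |x - x₀| := by
      have : q 0 * x₀ - q 1 = (q 0 * x - q 1) - q 0 * (x - x₀) := by ring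
      rw [this]
      refine (abs_sub _ _).trans ?_
      rw [abs_mul]
    have h2 : |q 0| * |x - x₀| ≤ 2 * Q * Q ^ (-(1 + lam) / 2) :=
      mul_le_mul hq0' hxx₀ (abs_nonneg _) (by linarith)
    have h3 : 2 * Q * Q ^ (-(1 + lam) / 2) = 2 * Q ^ ((1 - lam) / 2) := by
      rw [mul_assoc, hQmul]
    nlinarith [hNq1.trans h1le]
  refine ⟨hq0', by nlinarith, ?_⟩
  intro i hi2
  have hin : i.1 ≤ n := Nat.lt_succ_iff.mp i.2
  set g : ℝ → ℝ := fun t => q 0 * (f i.1 t - t * f' i.1 t) + q 1 * f' i.1 t - q i with hg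
  set s : Set ℝ := Set.uIcc x x₀ with hs
  have hsub : s ⊆ Set.Icc A B := Set.uIcc_subset_Icc hx hx₀
  have hconv : Convex ℝ s := convex_uIcc x x₀
  -- derivative of g on s
  set D : ℝ → ℝ := fun t => q 0 * (f' i.1 t - (1 * f' i.1 t + t * f'' i.1 t)) + q 1 * f'' i.1 t
    with hD
  have hgd : ∀ t ∈ s, HasDerivWithinAt g (D t) s t := by
    intro t ht
    have h1 : HasDerivWithinAt (f i.1) (f' i.1 t) s t :=
      ((hdf i.1 hi2 hin t (hsub ht)).mono hsub)
    have h2 : HasDerivWithinAt (f' i.1) (f'' i.1 t) s t :=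
      ((hdf' i.1 hi2 hin t (hsub ht)).mono hsub)
    have h3 : HasDerivWithinAt (fun u => u * f' i.1 u) (1 * f' i.1 t + t * f'' i.1 t) s t :=
      (hasDerivWithinAt_id t s).mul h2
    exact (((h1.sub h3).const_mul (q 0)).add (h2.const_mul (q 1))).sub_const (q i)
  -- bound the derivative
  have hq1xN : |q 1 - q 0 * x| ≤ Nq ^ (-lam) := by
    have := happx1
    rwa [show q 0 * x - q 1 = -(q 1 - q 0 * x) by ring, abs_neg] at this
  have hq1x : |q 1 - q 0 * x| ≤ 1 := hq1xN.trans hNq1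
  have hDbd : ∀ t ∈ s, ‖D t‖ ≤ 3 * M * Q ^ ((1 - lam) / 2) := by
    intro t ht
    have hDt : D t = f'' i.1 t * (q 1 - q 0 * t) := by rw [hD]; ring
    have hf''bd : |f'' i.1 t| ≤ M := (hbd i.1 hi2 hin t (hsub ht)).2.2
    have htx : |t - x| ≤ |x - x₀| := by
      rcases Set.mem_uIcc.mp ht with ⟨h1, h2⟩ | ⟨h1, h2⟩
      · rw [abs_of_nonneg (by linarith), abs_of_nonpos (by linarith)]; linarith
      · rw [abs_of_nonpos (by linarith), abs_of_nonneg (by linarith)]; linarith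
    have h4 : |q 1 - q 0 * t| ≤ 1 + 2 * Q ^ ((1 - lam) / 2) := by
      have : q 1 - q 0 * t = (q 1 - q 0 * x) - q 0 * (t - x) := by ring
      rw [this]
      have := (abs_sub (q 1 - q 0 * x) (q 0 * (t - x)))
      rw [abs_mul] at this
      have hb : |q 0| * |t - x| ≤ 2 * Q * Q ^ (-(1 + lam) / 2) :=
        mul_le_mul hq0' (htx.trans hxx₀) (abs_nonneg _) (by linarith)
      rw [mul_assoc, hQmul] at hb
      linarith
    rw [Real.norm_eq_abs, hDt, abs_mul]
    have h5 : 1 + 2 * Q ^ ((1 - lam) / 2) ≤ 3 * Q ^ ((1 - lam) / 2) := by linarith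
    calc |f'' i.1 t| * |q 1 - q 0 * t| ≤ M * (3 * Q ^ ((1 - lam) / 2)) :=
          mul_le_mul hf''bd (h4.trans h5) (abs_nonneg _) (by linarith)
      _ = 3 * M * Q ^ ((1 - lam) / 2) := by ring
  have hmvt := hconv.norm_image_sub_le_of_norm_hasDerivWithin_le hgd hDbd
    Set.left_mem_uIcc Set.right_mem_uIcc
  rw [Real.norm_eq_abs, Real.norm_eq_abs, abs_sub_comm x₀ x] at hmvt
  have hmvt2 : |g x₀ - g x| ≤ 3 * M * Q ^ (-lam) := by
    calc |g x₀ - g x| ≤ 3 * M * Q ^ ((1 - lam) / 2) * |x - x₀| := hmvt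
      _ ≤ 3 * M * Q ^ ((1 - lam) / 2) * Q ^ (-(1 + lam) / 2) := by
          apply mul_le_mul_of_nonneg_left hxx₀; positivity
      _ = 3 * M * Q ^ (-lam) := by rw [mul_assoc, hmul]
  have hgx : |g x| ≤ (1 + M) * Q ^ (-lam) := by
    have h1 : g x = (q 0 * f i.1 x - q i) + f' i.1 x * (q 1 - q 0 * x) := by rw [hg]; ring
    have h2 : |f' i.1 x| ≤ M := (hbd i.1 hi2 hin x hx).2.1
    have h3 := happx2 i hi2
    rw [h1]
    calc |(q 0 * f i.1 x - q i) + f' i.1 x * (q 1 - q 0 * x)|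
        ≤ |q 0 * f i.1 x - q i| + |f' i.1 x| * |q 1 - q 0 * x| := by
          refine (abs_add_le _ _).trans ?_; rw [abs_mul]
      _ ≤ Nq ^ (-lam) + M * Nq ^ (-lam) :=
          add_le_add h3 (mul_le_mul h2 hq1xN (abs_nonneg _) (by linarith))
      _ = (1 + M) * Nq ^ (-lam) := by ring
      _ ≤ (1 + M) * Q ^ (-lam) := by nlinarith
  have : |g x₀| ≤ (1 + 4 * M) * Q ^ (-lam) := by
    calc |g x₀| = |g x + (g x₀ - g x)| := by congr 1; ring
      _ ≤ |g x| + |g x₀ - g x| := abs_add_le _ _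
      _ ≤ (1 + M) * Q ^ (-lam) + 3 * M * Q ^ (-lam) := add_le_add hgx hmvt2
      _ = (1 + 4 * M) * Q ^ (-lam) := by ring
  calc |q 0 * (f i.1 x₀ - x₀ * f' i.1 x₀) + q 1 * f' i.1 x₀ - q i| = |g x₀| := rfl
    _ ≤ (1 + 4 * M) * Q ^ (-lam) := this
    _ ≤ 5 * M * Q ^ (-lam) := by nlinarith
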